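/- Let N ≥ 2, 𝒩 = {1,...,N}, and suppose h : ℝ^𝒩 → ℝ is the pointwise limit of the functions x ↦ ‖x − y^n‖_var − ‖y^n‖_var for some sequence (y^n) in ℝ^𝒩 with ‖y^n‖_var → ∞. Then there exist nonempty disjoint proper subsets I, J ⊊ 𝒩 and nonnegative vectors μ ∈ ℝ^I, ν ∈ ℝ^J with min_{i∈I} μ_i = 0 and min_{j∈J} ν_j = 0 such that h(x) = max_{i∈I} (x_i − μ_i) − min_{j∈J} (x_j + ν_j) for all x ∈ ℝ^𝒩. -/

import Mathlib

open Filter Topology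

private lemma aux_tendsto_sup' {ι : Type*} {s : Finset ι} (hs : s.Nonempty) {f : ℕ → ι → ℝ}
    {g : ι → ℝ} (hf : ∀ i ∈ s, Tendsto (fun n => f n i) atTop (𝓝 (g i))) :
    Tendsto (fun n => s.sup' hs (f n)) atTop (𝓝 (s.sup' hs g)) := by
  revert hf
  induction hs using Finset.Nonempty.cons_induction with
  | singleton a => intro hf; simpa using hf a (by simp)
  | cons a s ha hs ih =>
    intro hf
    have h1 : Tendsto (fun n => f n a ⊔ s.sup' hs (f n)) atTop (𝓝 (g a ⊔ s.sup' hs g)) :=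
      (hf a (Finset.mem_cons_self a s)).max (ih fun i hi => hf i (Finset.mem_cons_of_mem hi))
    rw [Finset.sup'_cons hs g]
    exact h1.congr fun n => (Finset.sup'_cons hs (f n)).symm

private lemma aux_tendsto_sup'_atBot {ι : Type*} {s : Finset ι} (hs : s.Nonempty) {f : ℕ → ι → ℝ}
    (hf : ∀ i ∈ s, Tendsto (fun n => f n i) atTop atBot) :
    Tendsto (fun n => s.sup' hs (f n)) atTop atBot := by
  rw [tendsto_atBot]
  intro b
  have : ∀ i ∈ s, ∀ᶠ n in atTop, f n i ≤ b := fun i hi => (hf i hi).eventually_le_atBot b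
  filter_upwards [(eventually_all_finset s).2 this] with n hn
  exact Finset.sup'_le _ _ hn

private lemma aux_neg_inf' {ι : Type*} (s : Finset ι) (hs : s.Nonempty) (f : ι → ℝ) :
    -(s.inf' hs f) = s.sup' hs (fun i => -f i) := by
  apply le_antisymm
  · rw [neg_le]
    refine Finset.le_inf' _ _ fun i hi => ?_
    rw [neg_le]
    exact Finset.le_sup' (fun i => -f i) hi
  · exact Finset.sup'_le _ _ fun i hi => neg_le_neg (Finset.inf'_le _ hi)

private lemma aux_frequently_eq {α : Type*} [Finite α] (c : ℕ → α) :
    ∃ a, ∃ᶠ n in atTop, c n = a := by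
  by_contra hcon
  push_neg at hcon
  obtain ⟨n, hn⟩ := (eventually_all.2 hcon).exists
  exact hn (c n) rfl

/-- every pointwise limit of `τ_var(yⁿ)` with `‖yⁿ‖_var → ∞` has
the form `x ↦ max_{i ∈ I} (x_i - μ_i) - min_{j ∈ J} (x_j + ν_j)`. -/
theorem lvar_horofunction_form (N : ℕ) (hN : 2 ≤ N) (h : (Fin N → ℝ) → ℝ)
    (y : ℕ → Fin N → ℝ)
    (hy : Tendsto (fun n => (⨆ i, y n i) - ⨅ i, y n i) atTop atTop)
    (hlim : ∀ x : Fin N → ℝ,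
      Tendsto (fun n =>
          ((⨆ i, (x i - y n i)) - ⨅ i, (x i - y n i))
            - ((⨆ i, y n i) - ⨅ i, y n i)) atTop (𝓝 (h x))) :
    ∃ I J : Finset (Fin N), ∃ hI : I.Nonempty, ∃ hJ : J.Nonempty,
      Disjoint I J ∧ I ⊂ Finset.univ ∧ J ⊂ Finset.univ ∧
    ∃ μ ν : Fin N → ℝ,
      (∀ i ∈ I, 0 ≤ μ i) ∧ (∀ j ∈ J, 0 ≤ ν j) ∧
      I.inf' hI μ = 0 ∧ J.inf' hJ ν = 0 ∧
      ∀ x : Fin N → ℝ,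
        h x = I.sup' hI (fun i => x i - μ i) - J.inf' hJ (fun j => x j + ν j) := by
  classical
  haveI : Nonempty (Fin N) := ⟨⟨0, by omega⟩⟩
  set p : ℕ → Fin N → ℝ := fun n i => y n i - ⨅ k, y n k with hpdef
  set q : ℕ → Fin N → ℝ := fun n i => (⨆ k, y n k) - y n i with hqdef
  have hp0 : ∀ n i, 0 ≤ p n i := fun n i =>
    sub_nonneg.2 (ciInf_le (Set.Finite.bddBelow (Set.finite_range _)) i)
  have hq0 : ∀ n i, 0 ≤ q n i := fun n i =>
    sub_nonneg.2 (le_ciSup (Set.Finite.bddAbove (Set.finite_range _)) i)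
  have hpq : ∀ n i, p n i + q n i = (⨆ k, y n k) - ⨅ k, y n k := fun n i => by
    simp only [hpdef, hqdef]; ring
  have hminp : ∀ n, ∃ i, p n i = 0 := by
    intro n
    obtain ⟨i, hi⟩ := Finite.exists_min (y n)
    refine ⟨i, ?_⟩
    have : (⨅ k, y n k) = y n i :=
      le_antisymm (ciInf_le (Set.Finite.bddBelow (Set.finite_range _)) i) (le_ciInf hi)
    simp [hpdef, this]
  have hminq : ∀ n, ∃ i, q n i = 0 := by
    intro n
    obtain ⟨i, hi⟩ := Finite.exists_max (y n)
    refine ⟨i, ?_⟩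
    have : (⨆ k, y n k) = y n i :=
      le_antisymm (ciSup_le hi) (le_ciSup (Set.Finite.bddAbove (Set.finite_range _)) i)
    simp [hqdef, this]
  -- compactness extraction in `(Fin N → ℝ≥0∞) × (Fin N → ℝ≥0∞)`
  obtain ⟨L, φ, hφ, hL⟩ := CompactSpace.tendsto_subseq
    (fun n => ((fun i => ENNReal.ofReal (p n i), fun i => ENNReal.ofReal (q n i)) :
      (Fin N → ENNReal) × (Fin N → ENNReal)))
  have hφt : Tendsto φ atTop atTop := hφ.tendsto_atTop
  have hP : ∀ i, Tendsto (fun n => ENNReal.ofReal (p (φ n) i)) atTop (𝓝 (L.1 i)) := fun i =>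
    (((continuous_apply i).comp continuous_fst).tendsto L).comp hL
  have hQ : ∀ i, Tendsto (fun n => ENNReal.ofReal (q (φ n) i)) atTop (𝓝 (L.2 i)) := fun i =>
    (((continuous_apply i).comp continuous_snd).tendsto L).comp hL
  have htop : Tendsto (fun n => (⨆ i, y (φ n) i) - ⨅ i, y (φ n) i) atTop atTop := hy.comp hφt
  have hdisj : ∀ i, L.1 i = ⊤ ∨ L.2 i = ⊤ := by
    intro i
    by_contra hcon
    push_neg at hcon
    have hsum : Tendsto (fun n => ENNReal.ofReal (p (φ n) i) + ENNReal.ofReal (q (φ n) i))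
        atTop (𝓝 (L.1 i + L.2 i)) := (hP i).add (hQ i)
    have hsum2 : Tendsto (fun n => ENNReal.ofReal (p (φ n) i) + ENNReal.ofReal (q (φ n) i))
        atTop (𝓝 ⊤) := by
      have h1 : Tendsto (fun n => ENNReal.ofReal ((⨆ i, y (φ n) i) - ⨅ i, y (φ n) i))
          atTop (𝓝 ⊤) := ENNReal.tendsto_ofReal_nhds_top.2 htop
      refine h1.congr fun n => ?_
      rw [← hpq (φ n) i, ENNReal.ofReal_add (hp0 _ _) (hq0 _ _)]
    have := tendsto_nhds_unique hsum hsum2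
    exact (ENNReal.add_ne_top.2 ⟨hcon.1, hcon.2⟩) this
  set I : Finset (Fin N) := Finset.univ.filter (fun i => L.1 i ≠ ⊤) with hIdef
  set J : Finset (Fin N) := Finset.univ.filter (fun i => L.2 i ≠ ⊤) with hJdef
  have hIJdisj : Disjoint I J := by
    rw [Finset.disjoint_left]
    intro i hiI hiJ
    rw [hIdef, Finset.mem_filter] at hiI
    rw [hJdef, Finset.mem_filter] at hiJ
    rcases hdisj i with h' | h'
    · exact hiI.2 h'
    · exact hiJ.2 h'
  -- nonemptiness of I
  choose c hc using fun n => hminp (φ n)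
  obtain ⟨i₀, hi₀⟩ := aux_frequently_eq c
  have hμ0 : L.1 i₀ = 0 := by
    obtain ⟨ψ, hψ, hψ0⟩ := extraction_of_frequently_atTop hi₀
    have h1 : Tendsto (fun n => ENNReal.ofReal (p (φ (ψ n)) i₀)) atTop (𝓝 (L.1 i₀)) :=
      (hP i₀).comp hψ.tendsto_atTop
    have h2 : ∀ n, ENNReal.ofReal (p (φ (ψ n)) i₀) = 0 := by
      intro n
      have := hc (ψ n)
      rw [hψ0 n] at this
      simp [this]
    have h3 : Tendsto (fun n => ENNReal.ofReal (p (φ (ψ n)) i₀)) atTop (𝓝 0) := by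
      simp only [h2]; exact tendsto_const_nhds
    exact tendsto_nhds_unique h1 h3
  have hi₀I : i₀ ∈ I := by simp [hIdef, hμ0]
  -- nonemptiness of J
  choose d hd using fun n => hminq (φ n)
  obtain ⟨j₀, hj₀⟩ := aux_frequently_eq d
  have hν0 : L.2 j₀ = 0 := by
    obtain ⟨ψ, hψ, hψ0⟩ := extraction_of_frequently_atTop hj₀
    have h1 : Tendsto (fun n => ENNReal.ofReal (q (φ (ψ n)) j₀)) atTop (𝓝 (L.2 j₀)) :=
      (hQ j₀).comp hψ.tendsto_atTop
    have h2 : ∀ n, ENNReal.ofReal (q (φ (ψ n)) j₀) = 0 := by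
      intro n
      have := hd (ψ n)
      rw [hψ0 n] at this
      simp [this]
    have h3 : Tendsto (fun n => ENNReal.ofReal (q (φ (ψ n)) j₀)) atTop (𝓝 0) := by
      simp only [h2]; exact tendsto_const_nhds
    exact tendsto_nhds_unique h1 h3
  have hj₀J : j₀ ∈ J := by simp [hJdef, hν0]
  have hIne : I.Nonempty := ⟨i₀, hi₀I⟩
  have hJne : J.Nonempty := ⟨j₀, hj₀J⟩
  have hj₀nI : j₀ ∉ I := fun h' => (Finset.disjoint_left.1 hIJdisj h') hj₀J
  have hi₀nJ : i₀ ∉ J := fun h' => (Finset.disjoint_right.1 hIJdisj h') hi₀I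
  have hIssub : I ⊂ Finset.univ := by
    rw [Finset.ssubset_univ_iff]
    intro hEq
    exact hj₀nI (hEq ▸ Finset.mem_univ j₀)
  have hJssub : J ⊂ Finset.univ := by
    rw [Finset.ssubset_univ_iff]
    intro hEq
    exact hi₀nJ (hEq ▸ Finset.mem_univ i₀)
  set μ : Fin N → ℝ := fun i => (L.1 i).toReal with hμdef
  set ν : Fin N → ℝ := fun i => (L.2 i).toReal with hνdef
  -- real convergence on I and J, divergence elsewhere
  have hpt : ∀ i ∈ I, Tendsto (fun n => p (φ n) i) atTop (𝓝 (μ i)) := by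
    intro i hi
    rw [hIdef, Finset.mem_filter] at hi
    have := (ENNReal.tendsto_toReal hi.2).comp (hP i)
    exact (this.congr fun n => ENNReal.toReal_ofReal (hp0 _ _))
  have hptop : ∀ i, i ∉ I → Tendsto (fun n => p (φ n) i) atTop atTop := by
    intro i hi
    rw [hIdef, Finset.mem_filter] at hi
    have hiT : L.1 i = ⊤ := by
      by_contra h'
      exact hi ⟨Finset.mem_univ i, h'⟩
    exact ENNReal.tendsto_ofReal_nhds_top.1 (hiT ▸ hP i)
  have hqt : ∀ j ∈ J, Tendsto (fun n => q (φ n) j) atTop (𝓝 (ν j)) := by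
    intro j hj
    rw [hJdef, Finset.mem_filter] at hj
    have := (ENNReal.tendsto_toReal hj.2).comp (hQ j)
    exact (this.congr fun n => ENNReal.toReal_ofReal (hq0 _ _))
  have hqtop : ∀ j, j ∉ J → Tendsto (fun n => q (φ n) j) atTop atTop := by
    intro j hj
    rw [hJdef, Finset.mem_filter] at hj
    have hjT : L.2 j = ⊤ := by
      by_contra h'
      exact hj ⟨Finset.mem_univ j, h'⟩
    exact ENNReal.tendsto_ofReal_nhds_top.1 (hjT ▸ hQ j)
  refine ⟨I, J, hIne, hJne, hIJdisj, hIssub, hJssub, μ, ν,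
    fun i _ => ENNReal.toReal_nonneg, fun j _ => ENNReal.toReal_nonneg, ?_, ?_, ?_⟩
  · apply le_antisymm
    · have := Finset.inf'_le μ hi₀I
      exact this.trans (by simp [hμdef, hμ0])
    · exact Finset.le_inf' _ _ fun i _ => ENNReal.toReal_nonneg
  · apply le_antisymm
    · have := Finset.inf'_le ν hj₀J
      exact this.trans (by simp [hνdef, hν0])
    · exact Finset.le_inf' _ _ fun j _ => ENNReal.toReal_nonneg
  · intro x
    have hne : (Finset.univ : Finset (Fin N)).Nonempty := Finset.univ_nonempty
    have hIc : Iᶜ.Nonempty := ⟨j₀, Finset.mem_compl.2 hj₀nI⟩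
    have hJc : Jᶜ.Nonempty := ⟨i₀, Finset.mem_compl.2 hi₀nJ⟩
    set F : ℕ → ℝ := fun n => Finset.univ.sup' hne (fun i => x i - p n i) with hFdef
    set G : ℕ → ℝ := fun n => Finset.univ.sup' hne (fun i => - x i - q n i) with hGdef
    have hFG : ∀ n, ((⨆ i, (x i - y n i)) - ⨅ i, (x i - y n i))
        - ((⨆ i, y n i) - ⨅ i, y n i) = F n + G n := by
      intro n
      rw [← Finset.sup'_univ_eq_ciSup (fun i => x i - y n i),
        ← Finset.inf'_univ_eq_ciInf (fun i => x i - y n i)]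
      have h1 : F n = Finset.univ.sup' hne (fun i => x i - y n i) + (⨅ k, y n k) := by
        rw [Finset.sup'_add]
        exact Finset.sup'_congr hne rfl fun i _ => by simp only [hpdef]; ring
      have h2 : G n = -(Finset.univ.inf' hne (fun i => x i - y n i)) - (⨆ k, y n k) := by
        rw [aux_neg_inf', sub_eq_add_neg, Finset.sup'_add]
        exact Finset.sup'_congr hne rfl fun i _ => by simp only [hqdef]; ring
      rw [h1, h2]
      ring
    have husplitI : ∀ (f : Fin N → ℝ),
        Finset.univ.sup' hne f = I.sup' hIne f ⊔ Iᶜ.sup' hIc f := by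
      intro f
      rw [← Finset.sup'_union hIne hIc f]
      exact Finset.sup'_congr hne (Finset.union_compl I).symm fun _ _ => rfl
    have husplitJ : ∀ (f : Fin N → ℝ),
        Finset.univ.sup' hne f = J.sup' hJne f ⊔ Jᶜ.sup' hJc f := by
      intro f
      rw [← Finset.sup'_union hJne hJc f]
      exact Finset.sup'_congr hne (Finset.union_compl J).symm fun _ _ => rfl
    -- limit of F along φ
    set LI : ℝ := I.sup' hIne (fun i => x i - μ i) with hLIdef
    set LJ : ℝ := J.sup' hJne (fun j => - x j - ν j) with hLJdef
    have h1I : Tendsto (fun n => I.sup' hIne (fun i => x i - p (φ n) i)) atTop (𝓝 LI) :=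
      aux_tendsto_sup' hIne fun i hi => tendsto_const_nhds.sub (hpt i hi)
    have h2I : Tendsto (fun n => Iᶜ.sup' hIc (fun i => x i - p (φ n) i)) atTop atBot := by
      refine aux_tendsto_sup'_atBot hIc fun i hi => ?_
      have hdiv := hptop i (Finset.mem_compl.1 hi)
      have : Tendsto (fun n => -(p (φ n) i)) atTop atBot :=
        tendsto_neg_atTop_atBot.comp hdiv
      have := tendsto_atBot_add_const_left atTop (x i) this
      exact this.congr fun n => by ring
    have hFlim : Tendsto (fun n => F (φ n)) atTop (𝓝 LI) := by
      have hev : ∀ᶠ n in atTop,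
          (I.sup' hIne (fun i => x i - p (φ n) i)) = F (φ n) := by
        filter_upwards [h1I.eventually (eventually_gt_nhds (by linarith : LI - 1 < LI)),
          h2I.eventually_le_atBot (LI - 1)] with n hn1 hn2
        rw [hFdef]
        simp only
        rw [husplitI (fun i => x i - p (φ n) i)]
        exact (sup_eq_left.2 (hn2.trans hn1.le)).symm
      exact h1I.congr' hev
    have h1J : Tendsto (fun n => J.sup' hJne (fun j => - x j - q (φ n) j)) atTop (𝓝 LJ) :=
      aux_tendsto_sup' hJne fun j hj => tendsto_const_nhds.sub (hqt j hj)
    have h2J : Tendsto (fun n => Jᶜ.sup' hJc (fun j => - x j - q (φ n) j)) atTop atBot := by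
      refine aux_tendsto_sup'_atBot hJc fun j hj => ?_
      have hdiv := hqtop j (Finset.mem_compl.1 hj)
      have : Tendsto (fun n => -(q (φ n) j)) atTop atBot :=
        tendsto_neg_atTop_atBot.comp hdiv
      have := tendsto_atBot_add_const_left atTop (- x j) this
      exact this.congr fun n => by ring
    have hGlim : Tendsto (fun n => G (φ n)) atTop (𝓝 LJ) := by
      have hev : ∀ᶠ n in atTop,
          (J.sup' hJne (fun j => - x j - q (φ n) j)) = G (φ n) := by
        filter_upwards [h1J.eventually (eventually_gt_nhds (by linarith : LJ - 1 < LJ)),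
          h2J.eventually_le_atBot (LJ - 1)] with n hn1 hn2
        rw [hGdef]
        simp only
        rw [husplitJ (fun j => - x j - q (φ n) j)]
        exact (sup_eq_left.2 (hn2.trans hn1.le)).symm
      exact h1J.congr' hev
    have hmain : Tendsto (fun n => F (φ n) + G (φ n)) atTop (𝓝 (LI + LJ)) := hFlim.add hGlim
    have hh : Tendsto (fun n => F (φ n) + G (φ n)) atTop (𝓝 (h x)) := by
      have := (hlim x).comp hφt
      exact this.congr fun n => hFG (φ n)
    have hxeq : h x = LI + LJ := tendsto_nhds_unique hh hmain
    have hLJeq : LJ = - J.inf' hJne (fun j => x j + ν j) := by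
      rw [hLJdef, aux_neg_inf']
      exact Finset.sup'_congr hJne rfl fun j _ => by ring
    rw [hxeq, hLIdef, hLJeq]
    ring
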